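/- The optimal codelength of the (δ_s, G)-ICSIE over F_q equals minrk_q(δ_s, G), the minimum rank over F_q among all generalized fitting matrices for G. -/

import Mathlib

open Matrix

section Aux

variable {F : Type} [Field F] [DecidableEq F] {n : ℕ}

/-- dot product with a fixed vector, as a linear map -/
noncomputable def dotL (z : Fin n → F) : (Fin n → F) →ₗ[F] F where
  toFun u := z ⬝ᵥ u
  map_add' u v := by simp [dotProduct_add]
  map_smul' c u := by simp [dotProduct_smul, smul_eq_mul]

lemma sep_lemma (R : Submodule F (Fin n → F)) {v : Fin n → F} (hv : v ∉ R) :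
    ∃ y : Fin n → F, (∀ u ∈ R, y ⬝ᵥ u = 0) ∧ y ⬝ᵥ v ≠ 0 := by
  classical
  obtain ⟨φ, hφv, hφR⟩ := R.exists_dual_map_eq_bot_of_notMem hv inferInstance
  refine ⟨fun a => φ (Pi.single a 1), ?_, ?_⟩
  all_goals
    have key : ∀ u : Fin n → F,
        (fun a => φ (Pi.single a 1)) ⬝ᵥ u = φ u := by
      intro u
      have hu : u = ∑ a, u a • (Pi.single a 1 : Fin n → F) := by
        funext b
        simp [Finset.sum_apply, Pi.single_apply]
      conv_rhs => rw [hu]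
      rw [map_sum]
      simp [dotProduct, mul_comm]
  · intro u hu
    rw [key]
    have : φ u ∈ R.map φ := Submodule.mem_map_of_mem hu
    rw [hφR] at this
    exact (Submodule.mem_bot F).mp this
  · rw [key]; exact hφv

/-- zeroing-out of coordinates in `S`, as a linear map -/
noncomputable def projL (S : Finset (Fin n)) : (Fin n → F) →ₗ[F] (Fin n → F) where
  toFun u := fun a => if a ∈ S then 0 else u a
  map_add' u v := by funext a; by_cases h : a ∈ S <;> simp [h]
  map_smul' c u := by funext a; by_cases h : a ∈ S <;> simp [h]

variable {m : ℕ} (δs : ℕ) (X : Fin m → Finset (Fin n)) (f : Fin m → Fin n)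

lemma dir1 (hf : ∀ i, f i ∉ X i)
    (A : Matrix (Fin n)
      ((i : Fin m) × {B : Finset (Fin n) // B ⊆ X i ∧ B.card = min (2 * δs) (X i).card}) F)
    (hA : ∀ p : (i : Fin m) ×
        {B : Finset (Fin n) // B ⊆ X i ∧ B.card = min (2 * δs) (X i).card},
      A (f p.1) p = 1 ∧ (∀ a ∈ p.2.1, A a p = 0) ∧
        (∀ a : Fin n, a ∉ X p.1 → a ≠ f p.1 → A a p = 0)) :
    ∃ G : Matrix (Fin n) (Fin A.rank) F,
      ∀ z : Fin n → F,
        (∃ i : Fin m, z (f i) ≠ 0 ∧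
          ((X i).filter (fun j => z j ≠ 0)).card ≤ 2 * δs) →
        Matrix.vecMul z G ≠ 0 := by
  classical
  set U := LinearMap.range A.mulVecLin with hU
  have hfr : Module.finrank F U = A.rank := rfl
  let b : Module.Basis (Fin A.rank) F U := Module.finBasisOfFinrankEq F U hfr
  refine ⟨Matrix.of (fun a j => (b j : Fin n → F) a), ?_⟩
  rintro z ⟨i, hzf, hcard⟩ hzero
  have hb : ∀ j, z ⬝ᵥ ((b j : Fin n → F)) = 0 := by
    intro j
    have := congrFun hzero j
    simpa [Matrix.vecMul, Matrix.of_apply, dotProduct] using this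
  have h0 : ∀ w : U, z ⬝ᵥ (w : Fin n → F) = 0 := by
    have hext : (dotL z).comp U.subtype = 0 := b.ext fun j => by
      simpa [dotL] using hb j
    intro w
    have := congrFun (congrArg DFunLike.coe hext) w
    simpa [dotL] using this
  set s0 := (X i).filter (fun j => z j ≠ 0) with hs0
  have hs0X : s0 ⊆ X i := Finset.filter_subset _ _
  obtain ⟨B, hs0B, hBX, hBcard⟩ := Finset.exists_subsuperset_card_eq hs0X
    (le_min hcard (Finset.card_le_card hs0X)) (min_le_right _ _)
  set p : (i : Fin m) × {B : Finset (Fin n) // B ⊆ X i ∧ B.card = min (2 * δs) (X i).card} :=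
    ⟨i, ⟨B, hBX, hBcard⟩⟩ with hp
  have hmem : (fun a => A a p) ∈ U := by
    refine ⟨Pi.single p 1, ?_⟩
    funext a
    simp [Matrix.mulVecLin_apply]
  have hzp := h0 ⟨_, hmem⟩
  have hsum : z ⬝ᵥ (fun a => A a p) = z (f i) := by
    rw [dotProduct]
    rw [Finset.sum_eq_single (f i)]
    · rw [show A (f i) p = 1 from (hA p).1, mul_one]
    · intro a _ hane
      by_cases haB : a ∈ B
      · rw [(hA p).2.1 a haB, mul_zero]
      · by_cases haX : a ∈ X i
        · have hza : z a = 0 := by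
            by_contra hza
            exact haB (hs0B (Finset.mem_filter.mpr ⟨haX, hza⟩))
          rw [hza, zero_mul]
        · rw [(hA p).2.2 a haX hane, mul_zero]
    · intro h; exact absurd (Finset.mem_univ _) h
  rw [show ((⟨_, hmem⟩ : U) : Fin n → F) = fun a => A a p from rfl, hsum] at hzp
  exact hzf hzp

lemma dir2 {N : ℕ} (hf : ∀ i, f i ∉ X i) (G : Matrix (Fin n) (Fin N) F)
    (hG : ∀ z : Fin n → F,
        (∃ i : Fin m, z (f i) ≠ 0 ∧
          ((X i).filter (fun j => z j ≠ 0)).card ≤ 2 * δs) →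
        Matrix.vecMul z G ≠ 0) :
    ∃ A : Matrix (Fin n)
        ((i : Fin m) × {B : Finset (Fin n) // B ⊆ X i ∧ B.card = min (2 * δs) (X i).card}) F,
      (∀ p : (i : Fin m) ×
          {B : Finset (Fin n) // B ⊆ X i ∧ B.card = min (2 * δs) (X i).card},
        A (f p.1) p = 1 ∧ (∀ a ∈ p.2.1, A a p = 0) ∧
          (∀ a : Fin n, a ∉ X p.1 → a ≠ f p.1 → A a p = 0)) ∧
      A.rank ≤ N := by
  classical
  have hcol : ∀ p : (i : Fin m) ×
      {B : Finset (Fin n) // B ⊆ X i ∧ B.card = min (2 * δs) (X i).card},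
      ∃ c : Fin n → F, c ∈ LinearMap.range G.mulVecLin ∧
        c (f p.1) = 1 ∧ (∀ a ∈ p.2.1, c a = 0) ∧
        (∀ a : Fin n, a ∉ X p.1 → a ≠ f p.1 → c a = 0) := by
    rintro ⟨i, B, hBX, hBc⟩
    set L := (projL ((X i) \ B)).comp G.mulVecLin with hL
    have hmem : Pi.single (f i) (1 : F) ∈ LinearMap.range L := by
      by_contra hnm
      obtain ⟨y, hy0, hyv⟩ := sep_lemma (LinearMap.range L) hnm
      set z : Fin n → F := fun a => if a ∈ (X i) \ B then 0 else y a with hz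
      have hzf : z (f i) = y (f i) := by
        simp [hz, Finset.mem_sdiff, hf i]
      have hyf : y (f i) ≠ 0 := by
        simpa [dotProduct_single] using hyv
      have hzG : z ᵥ* G = 0 := by
        funext j
        have h1 : y ⬝ᵥ L (Pi.single j 1) = 0 := hy0 _ ⟨_, rfl⟩
        have h2 : (z ᵥ* G) j = y ⬝ᵥ L (Pi.single j 1) := by
          rw [Matrix.vecMul, dotProduct, dotProduct]
          refine Finset.sum_congr rfl fun a _ => ?_
          by_cases h : a ∈ (X i) \ B <;>
            simp [hz, hL, projL, Matrix.mulVecLin_apply, h]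
        rw [h2, h1, Pi.zero_apply]
      have hsub : (X i).filter (fun j => z j ≠ 0) ⊆ B := by
        intro a ha
        obtain ⟨haX, hza⟩ := Finset.mem_filter.mp ha
        by_contra haB
        exact hza (by simp [hz, Finset.mem_sdiff, haX, haB])
      have hcard : ((X i).filter (fun j => z j ≠ 0)).card ≤ 2 * δs :=
        le_trans (Finset.card_le_card hsub) (hBc ▸ min_le_left _ _)
      exact hG z ⟨i, hzf ▸ hyf, hcard⟩ hzG
    obtain ⟨x, hx⟩ := hmem
    refine ⟨G *ᵥ x, ⟨x, rfl⟩, ?_, ?_, ?_⟩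
    · have := congrFun hx (f i)
      simpa [hL, projL, Matrix.mulVecLin_apply, Finset.mem_sdiff, hf i] using this
    · intro a haB
      have h := congrFun hx a
      have haf : a ≠ f i := fun h' => hf i (h' ▸ hBX haB)
      simpa [hL, projL, Matrix.mulVecLin_apply, Finset.mem_sdiff, haB,
        Pi.single_apply, haf] using h
    · intro a haX haf
      have h := congrFun hx a
      simpa [hL, projL, Matrix.mulVecLin_apply, Finset.mem_sdiff, haX,
        Pi.single_apply, haf] using h
  choose c hc1 hc2 hc3 hc4 using hcol
  refine ⟨Matrix.of fun a p => c p a, fun p => ⟨hc2 p, hc3 p, hc4 p⟩, ?_⟩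
  have hle : LinearMap.range (Matrix.of fun a p => c p a).mulVecLin ≤
      LinearMap.range G.mulVecLin := by
    rintro u ⟨x, rfl⟩
    have heq : (Matrix.of fun a p => c p a).mulVecLin x = ∑ p, x p • c p := by
      funext a
      simp [Matrix.mulVecLin_apply, Matrix.mulVec, dotProduct, Finset.sum_apply,
        mul_comm]
    rw [heq]
    exact Submodule.sum_mem _ fun p _ => Submodule.smul_mem _ _ (hc1 p)
  exact le_trans (Submodule.finrank_mono hle) G.rank_le_width

end Aux

/-- The optimal codelength of the `(δs, G)`-ICSIE equals
`minrk_q(δs, G)`, the minimum rank among generalized fitting matrices. -/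
theorem stmt4 {F : Type} [Field F] [DecidableEq F]
    {n m : ℕ} (δs : ℕ)
    (X : Fin m → Finset (Fin n)) (f : Fin m → Fin n)
    (hf : ∀ i, f i ∉ X i) :
    sInf {N : ℕ | ∃ G : Matrix (Fin n) (Fin N) F,
        ∀ z : Fin n → F,
          (∃ i : Fin m, z (f i) ≠ 0 ∧
            ((X i).filter (fun j => z j ≠ 0)).card ≤ 2 * δs) →
          Matrix.vecMul z G ≠ 0} =
      sInf {r : ℕ | ∃ A : Matrix (Fin n)
          ((i : Fin m) ×
            {B : Finset (Fin n) // B ⊆ X i ∧ B.card = min (2 * δs) (X i).card}) F,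
        (∀ p : (i : Fin m) ×
            {B : Finset (Fin n) // B ⊆ X i ∧ B.card = min (2 * δs) (X i).card},
          A (f p.1) p = 1 ∧ (∀ a ∈ p.2.1, A a p = 0) ∧
            (∀ a : Fin n, a ∉ X p.1 → a ≠ f p.1 → A a p = 0)) ∧
        A.rank = r} := by
  classical
  set LHS := {N : ℕ | ∃ G : Matrix (Fin n) (Fin N) F,
      ∀ z : Fin n → F,
        (∃ i : Fin m, z (f i) ≠ 0 ∧
          ((X i).filter (fun j => z j ≠ 0)).card ≤ 2 * δs) →
        Matrix.vecMul z G ≠ 0} with hLHS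
  set RHS := {r : ℕ | ∃ A : Matrix (Fin n)
      ((i : Fin m) ×
        {B : Finset (Fin n) // B ⊆ X i ∧ B.card = min (2 * δs) (X i).card}) F,
    (∀ p : (i : Fin m) ×
        {B : Finset (Fin n) // B ⊆ X i ∧ B.card = min (2 * δs) (X i).card},
      A (f p.1) p = 1 ∧ (∀ a ∈ p.2.1, A a p = 0) ∧
        (∀ a : Fin n, a ∉ X p.1 → a ≠ f p.1 → A a p = 0)) ∧
    A.rank = r} with hRHS
  have hLne : LHS.Nonempty := by
    refine ⟨n, (1 : Matrix (Fin n) (Fin n) F), ?_⟩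
    rintro z ⟨i, hzf, -⟩ h0
    rw [Matrix.vecMul_one] at h0
    exact hzf (congrFun h0 (f i))
  have hRne : RHS.Nonempty := by
    refine ⟨_, Matrix.of (fun a p => if a = f p.1 then (1 : F) else 0), fun p => ?_, rfl⟩
    refine ⟨by simp, fun a haB => ?_, fun a haX haf => ?_⟩
    · have : a ≠ f p.1 := fun h' => hf p.1 (h' ▸ p.2.2.1 haB)
      simp [this]
    · simp [haf]
  apply le_antisymm
  · obtain ⟨A, hA, hr⟩ := Nat.sInf_mem hRne
    obtain ⟨G, hG⟩ := dir1 δs X f hf A hA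
    rw [← hr]
    exact Nat.sInf_le ⟨G, hG⟩
  · obtain ⟨G, hG⟩ := Nat.sInf_mem hLne
    obtain ⟨A, hA, hrank⟩ := dir2 δs X f hf G hG
    exact le_trans (Nat.sInf_le ⟨A, hA, rfl⟩) hrank
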